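/- Let S ⊆ ℂ, N a positive integer, and let S_N be the set of points p ∈ S such that S has at most N distinct limit directions at p. Then for every real d > 1, the d-dimensional Hausdorff measure of S_N is zero; in particular the Hausdorff dimension of S_N is at most 1. -/

import Mathlib

open Complex Filter MeasureTheory

/-- `t` is a limit direction of `S` at `p`. -/
def IsLimitDirection (S : Set ℂ) (p t : ℂ) : Prop :=
  ‖t‖ = 1 ∧ ∃ q : ℕ → ℂ, (∀ j, q j ∈ S \ {p}) ∧
    Tendsto q atTop (nhds p) ∧
    Tendsto (fun j => (q j - p) / (‖q j - p‖ : ℂ)) atTop (nhds t)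

lemma stepA (S : Set ℂ) (p : ℂ) (ε : ℝ) (hε : 0 < ε) :
    ∃ r > 0, ∀ q ∈ S, q ≠ p → dist q p < r →
      ∃ t, IsLimitDirection S p t ∧ ‖(q - p) / (‖q - p‖ : ℂ) - t‖ < ε := by
  by_contra h
  push_neg at h
  have h' : ∀ j : ℕ, ∃ q, q ∈ S ∧ q ≠ p ∧ dist q p < 1 / (j + 1) ∧
      ∀ t, IsLimitDirection S p t → ε ≤ ‖(q - p) / (‖q - p‖ : ℂ) - t‖ := by
    intro j
    obtain ⟨q, hq1, hq2, hq3, hq4⟩ := h (1 / (j + 1)) (by positivity)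
    exact ⟨q, hq1, hq2, hq3, hq4⟩
  choose q hqS hqne hqd hqfar using h'
  set dir : ℕ → ℂ := fun j => (q j - p) / (‖q j - p‖ : ℂ) with hdir
  have hnorm : ∀ j, dir j ∈ Metric.sphere (0 : ℂ) 1 := by
    intro j
    have hne : q j - p ≠ 0 := sub_ne_zero.mpr (hqne j)
    have : ‖q j - p‖ ≠ 0 := norm_ne_zero_iff.mpr hne
    simp only [dir, Metric.mem_sphere, dist_zero_right, norm_div]
    rw [Complex.norm_real, Real.norm_of_nonneg (norm_nonneg _), div_self this]
  obtain ⟨u, hu, φ, hφ, hconv⟩ := (isCompact_sphere (0 : ℂ) 1).tendsto_subseq hnorm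
  have hunorm : ‖u‖ = 1 := by simpa using hu
  have hqtend : Tendsto (fun j => q (φ j)) atTop (nhds p) := by
    rw [tendsto_iff_dist_tendsto_zero]
    refine squeeze_zero (fun j => dist_nonneg) (fun j => (hqd (φ j)).le.trans ?_)
      tendsto_one_div_add_atTop_nhds_zero_nat
    gcongr
    exact_mod_cast (hφ.id_le j)
  have hlim : IsLimitDirection S p u :=
    ⟨hunorm, fun j => q (φ j), fun j => ⟨hqS (φ j), hqne (φ j)⟩, hqtend, hconv⟩
  have : Tendsto (fun j => ‖dir (φ j) - u‖) atTop (nhds 0) := by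
    have := hconv.sub (tendsto_const_nhds (x := u))
    simpa using this.norm
  have hev := this.eventually (eventually_lt_nhds hε)
  obtain ⟨j, hj⟩ := hev.exists
  exact absurd (hqfar (φ j) u hlim) (not_le.mpr hj)

section
open Real


lemma norm_exp_sub_one (θ : ℝ) :
    ‖Complex.exp (θ * Complex.I) - 1‖ = 2 * |Real.sin (θ / 2)| := by
  rw [Complex.exp_mul_I]
  have h1 : ‖(Complex.cos θ + Complex.sin θ * Complex.I - 1)‖ ^ 2
      = (Real.cos θ - 1) ^ 2 + Real.sin θ ^ 2 := by
    rw [Complex.sq_norm, Complex.normSq_apply]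
    simp [Complex.cos_ofReal_re, Complex.sin_ofReal_re]
    ring
  have hc : Real.cos θ = 2 * Real.cos (θ / 2) ^ 2 - 1 := by
    rw [← Real.cos_two_mul]; ring_nf
  have h3 : ‖(Complex.cos θ + Complex.sin θ * Complex.I - 1)‖ ^ 2
      = (2 * |Real.sin (θ / 2)|) ^ 2 := by
    rw [h1]
    nlinarith [Real.sin_sq_add_cos_sq θ, Real.sin_sq_add_cos_sq (θ / 2),
      _root_.sq_abs (Real.sin (θ / 2))]
  have := congrArg Real.sqrt h3
  rwa [Real.sqrt_sq (norm_nonneg _), Real.sqrt_sq (by positivity)] at this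

lemma sin_lb {M : ℝ} (hM : 2 ≤ M) {x : ℝ} (hx1 : 1 ≤ x) (hx2 : x ≤ M - 1) :
    Real.sin (π / M) ≤ Real.sin (π * x / M) := by
  have hπ := Real.pi_pos
  have hM0 : 0 < M := by linarith
  have h1 : π / M ≤ π * x / M := by
    rw [div_le_div_iff₀ hM0 hM0]
    nlinarith [mul_nonneg (mul_nonneg hπ.le hM0.le) (by linarith : (0:ℝ) ≤ x - 1)]
  have h2 : π * x / M ≤ π - π / M := by
    rw [sub_div' hM0.ne', div_le_div_iff₀ hM0 hM0]
    nlinarith [mul_nonneg (mul_nonneg hπ.le hM0.le) (by linarith : (0:ℝ) ≤ M - 1 - x)]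
  have hhalf : π / M ≤ π / 2 := by
    apply div_le_div_of_nonneg_left hπ.le (by norm_num) hM
  have hpos : 0 < π / M := div_pos hπ hM0
  rcases le_or_gt (π * x / M) (π / 2) with hc | hc
  · exact Real.strictMonoOn_sin.monotoneOn ⟨by linarith, hhalf⟩ ⟨by linarith, hc⟩ h1
  · rw [← Real.sin_pi_sub (π * x / M)]
    exact Real.strictMonoOn_sin.monotoneOn ⟨by linarith, hhalf⟩
      ⟨by linarith, by linarith⟩ (by linarith)

lemma cand_dist {M : ℕ} (hM : 2 ≤ M) {m j : ℕ} (hj : j < m) (hm : m < M) :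
    2 * Real.sin (π / M) ≤
      ‖Complex.exp ((2 * π * m / M : ℝ) * Complex.I) -
        Complex.exp ((2 * π * j / M : ℝ) * Complex.I)‖ := by
  have hM0 : (0:ℝ) < M := by positivity
  set a : ℝ := 2 * π * m / M
  set b : ℝ := 2 * π * j / M
  have hfact : Complex.exp (a * Complex.I) - Complex.exp (b * Complex.I)
      = Complex.exp (b * Complex.I) * (Complex.exp (((a - b : ℝ)) * Complex.I) - 1) := by
    rw [mul_sub, mul_one, ← Complex.exp_add]
    congr 2
    push_cast
    ring
  rw [hfact, norm_mul, Complex.norm_exp_ofReal_mul_I, one_mul,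
    norm_exp_sub_one]
  have hab : (a - b) / 2 = π * ((m : ℝ) - j) / M := by
    simp only [a, b]; field_simp
  rw [hab]
  have hπ := Real.pi_pos
  have hx1 : (1:ℝ) ≤ (m : ℝ) - j := by
    have : (j:ℝ) + 1 ≤ m := by exact_mod_cast hj
    linarith
  have hx2 : (m : ℝ) - j ≤ (M:ℝ) - 1 := by
    have : (m:ℝ) + 1 ≤ M := by exact_mod_cast hm
    have : (0:ℝ) ≤ j := Nat.cast_nonneg j
    linarith
  have hsin := sin_lb (by exact_mod_cast hM) hx1 hx2
  have hnn : 0 ≤ Real.sin (π * ((m : ℝ) - j) / M) := by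
    apply Real.sin_nonneg_of_nonneg_of_le_pi
    · positivity
    · rw [div_le_iff₀ hM0]; nlinarith
  rw [_root_.abs_of_nonneg hnn]
  linarith

lemma gap {N : ℕ} (hN : 0 < N) (F : Finset ℂ) (hF : F.card ≤ N) :
    ∃ v : ℂ, ‖v‖ = 1 ∧ ∀ e ∈ F,
      3 * (Real.sin (π / (2 * N + 1)) / 4) < ‖v - e‖ ∧
      3 * (Real.sin (π / (2 * N + 1)) / 4) < ‖v + e‖ := by
  set M : ℕ := 2 * N + 1 with hM
  have hM2 : 2 ≤ M := by omega
  have hMcast : ((M : ℕ) : ℝ) = 2 * (N:ℝ) + 1 := by push_cast [hM]; ring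
  have hπ := Real.pi_pos
  set s : ℝ := Real.sin (π / (2 * N + 1)) with hs
  have hs0 : 0 < s := by
    apply Real.sin_pos_of_pos_of_lt_pi
    · positivity
    · rw [div_lt_iff₀ (by positivity)]
      have h1 : (1:ℝ) ≤ N := by exact_mod_cast hN
      nlinarith
  by_contra hcon
  push_neg at hcon
  set c : ℕ → ℂ := fun m => Complex.exp ((2 * π * m / M : ℝ) * Complex.I) with hc
  have hcnorm : ∀ m, ‖c m‖ = 1 := fun m => by
    simp only [hc]
    exact Complex.norm_exp_ofReal_mul_I _
  set F' : Finset ℂ := F ∪ F.image (fun e => -e) with hF'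
  have hbad : ∀ m : ℕ, ∃ w ∈ F', ‖c m - w‖ ≤ 3 * (s / 4) := by
    intro m
    obtain ⟨e, he, hcase⟩ := hcon (c m) (hcnorm m)
    rcases le_or_gt ‖c m - e‖ (3 * (s / 4)) with h | h
    · exact ⟨e, Finset.mem_union_left _ he, h⟩
    · refine ⟨-e, Finset.mem_union_right _ (Finset.mem_image_of_mem _ he), ?_⟩
      rw [sub_neg_eq_add]
      exact hcase h
  choose g hgF hgd using hbad
  have hcard : F'.card < (Finset.range M).card := by
    rw [Finset.card_range]
    calc F'.card ≤ F.card + (F.image (fun e => -e)).card := Finset.card_union_le _ _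
    _ ≤ N + N := by
        gcongr
        exact (Finset.card_image_le).trans hF
    _ < M := by omega
  obtain ⟨m, hm, j, hj, hne, heq⟩ :=
    Finset.exists_ne_map_eq_of_card_lt_of_maps_to hcard (fun m _ => hgF m)
  rw [Finset.mem_range] at hm hj
  wlog hlt : j < m generalizing m j
  · exact this j hj m hm hne.symm heq.symm (by omega)
  have hdd := cand_dist hM2 hlt hm
  have htri : ‖c m - c j‖ ≤ 3 * (s / 4) + 3 * (s / 4) := by
    calc ‖c m - c j‖ = ‖(c m - g m) - (c j - g j)‖ := by rw [heq]; ring_nf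
    _ ≤ ‖c m - g m‖ + ‖c j - g j‖ := norm_sub_le _ _
    _ ≤ 3 * (s / 4) + 3 * (s / 4) := add_le_add (hgd m) (hgd j)
  have hss : Real.sin (π / M) = s := by rw [hs, hMcast]
  have hdd2 : 2 * s ≤ ‖c m - c j‖ := hss ▸ hdd
  linarith [hdd2, htri, hs0]

end

lemma piece_null {d : ℝ} (hd : 1 < d) (v : ℂ) (hv : ‖v‖ = 1) {ε : ℝ} (hε : 0 < ε)
    (hε1 : ε ≤ 1) (P : Set ℂ)
    (hP : ∀ p ∈ P, ∀ q ∈ P, q ≠ p →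
      ε < ‖(q - p) / (‖q - p‖ : ℂ) - v‖ ∧ ε < ‖(q - p) / (‖q - p‖ : ℂ) + v‖) :
    μH[d] P = 0 := by
  have hd0 : (0:ℝ) ≤ d := by linarith
  -- the projection
  set f : P → ℝ := fun x => ((x : ℂ) * (starRingEnd ℂ) v).im with hf
  have key : ∀ x y : P, dist x y ≤ Real.sqrt 2 / ε * dist (f x) (f y) := by
    rintro ⟨p, hp⟩ ⟨q, hq⟩
    rcases eq_or_ne q p with rfl | hne
    · simp [Subtype.dist_eq]
    have hqp : q - p ≠ 0 := sub_ne_zero.mpr hne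
    have hnz : ‖q - p‖ ≠ 0 := norm_ne_zero_iff.mpr hqp
    have hnpos : 0 < ‖q - p‖ := norm_pos_iff.mpr hqp
    set u : ℂ := (q - p) / (‖q - p‖ : ℂ) with hu
    have hun : ‖u‖ = 1 := by
      rw [hu, norm_div, Complex.norm_real, Real.norm_of_nonneg (norm_nonneg _),
        div_self hnz]
    obtain ⟨h1, h2⟩ := hP p hp q hq hne
    set z : ℂ := u * (starRingEnd ℂ) v with hz
    have hzn : ‖z‖ = 1 := by
      rw [hz, norm_mul, hun, RCLike.norm_conj, hv, one_mul]
    have hab : z.re ^ 2 + z.im ^ 2 = 1 := by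
      have : Complex.normSq z = 1 := by
        rw [← Complex.sq_norm, hzn]; norm_num
      rw [Complex.normSq_apply] at this
      nlinarith
    have hsub : ‖u - v‖ ^ 2 = 2 - 2 * z.re := by
      rw [Complex.sq_norm, Complex.normSq_sub]
      have h1 : Complex.normSq u = 1 := by
        rw [← Complex.sq_norm, hun]; norm_num
      have h2 : Complex.normSq v = 1 := by
        rw [← Complex.sq_norm, hv]; norm_num
      rw [h1, h2, hz]; ring
    have hadd : ‖u + v‖ ^ 2 = 2 + 2 * z.re := by
      have : u + v = u - (-v) := by ring
      rw [this, Complex.sq_norm, Complex.normSq_sub]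
      have h1 : Complex.normSq u = 1 := by
        rw [← Complex.sq_norm, hun]; norm_num
      have h2 : Complex.normSq (-v) = 1 := by
        rw [← Complex.sq_norm, norm_neg, hv]; norm_num
      rw [h1, h2, hz]
      simp [Complex.mul_re, Complex.conj_re, Complex.conj_im]
      ring
    have hre : |z.re| < 1 - ε ^ 2 / 2 := by
      have e1 : ε ^ 2 < 2 - 2 * z.re := by
        rw [← hsub]; nlinarith [norm_nonneg (u - v)]
      have e2 : ε ^ 2 < 2 + 2 * z.re := by
        rw [← hadd]; nlinarith [norm_nonneg (u + v)]
      rw [abs_lt]; constructor <;> nlinarith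
    have him : ε ^ 2 / 2 ≤ z.im ^ 2 := by nlinarith [_root_.sq_abs z.re, abs_nonneg z.re]
    have hkey : ε / Real.sqrt 2 * ‖q - p‖ ≤ |f ⟨q, hq⟩ - f ⟨p, hp⟩| := by
      have hfq : f ⟨q, hq⟩ - f ⟨p, hp⟩ = ((q - p) * (starRingEnd ℂ) v).im := by
        simp only [hf, ← Complex.sub_im, ← sub_mul]
      have hqpu : (q - p) = (‖q - p‖ : ℂ) * u := by
        rw [hu, mul_div_cancel₀]
        exact_mod_cast Complex.ofReal_ne_zero.mpr hnz
      have him2 : ((q - p) * (starRingEnd ℂ) v).im = ‖q - p‖ * z.im := by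
        conv_lhs => rw [hqpu]
        rw [hz, mul_assoc, Complex.im_ofReal_mul]
      rw [hfq, him2, abs_mul, _root_.abs_of_nonneg (norm_nonneg _)]
      have h2 : ε / Real.sqrt 2 ≤ |z.im| := by
        have h3 : (ε / Real.sqrt 2) ^ 2 ≤ z.im ^ 2 := by
          rw [div_pow, Real.sq_sqrt (by norm_num : (0:ℝ) ≤ 2)]
          linarith
        have h4 := Real.sqrt_le_sqrt h3
        rwa [Real.sqrt_sq_eq_abs, Real.sqrt_sq_eq_abs,
          _root_.abs_of_nonneg (by positivity)] at h4
      calc ε / Real.sqrt 2 * ‖q - p‖ ≤ |z.im| * ‖q - p‖ := by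
            apply mul_le_mul_of_nonneg_right h2 (norm_nonneg _)
        _ = ‖q - p‖ * |z.im| := by ring
    rw [Subtype.dist_eq, dist_eq_norm, Real.dist_eq, norm_sub_rev p q, abs_sub_comm]
    have hs2 : (0:ℝ) < Real.sqrt 2 := by positivity
    have hmul := mul_le_mul_of_nonneg_left hkey (le_of_lt (div_pos hs2 hε))
    calc ‖q - p‖ = Real.sqrt 2 / ε * (ε / Real.sqrt 2 * ‖q - p‖) := by
          field_simp
      _ ≤ Real.sqrt 2 / ε * |f ⟨q, hq⟩ - f ⟨p, hp⟩| := hmul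
  -- antilipschitz
  have hKnn : 0 ≤ Real.sqrt 2 / ε := by positivity
  have hanti : AntilipschitzWith ⟨Real.sqrt 2 / ε, hKnn⟩ f := by
    apply AntilipschitzWith.of_le_mul_dist
    intro x y
    exact key x y
  have hreal : (μH[d] : Measure ℝ) = 0 :=
    Real.hausdorffMeasure_of_finrank_lt (by simpa using hd)
  have hP0 : μH[d] (Set.univ : Set P) = 0 := by
    have := hanti.hausdorffMeasure_preimage_le hd0 (Set.univ : Set ℝ)
    rw [Set.preimage_univ] at this
    refine le_antisymm (this.trans ?_) zero_le
    rw [hreal]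
    simp
  have hiso : Isometry ((↑) : P → ℂ) := isometry_subtype_coe
  have himg := hiso.hausdorffMeasure_image (Or.inl hd0) (Set.univ : Set P)
  rw [Set.image_univ, Subtype.range_coe] at himg
  exact himg.trans hP0

theorem stmt2 (S : Set ℂ) (N : ℕ) (hN : 0 < N) :
    (∀ d : ℝ, 1 < d →
      μH[d] {p | p ∈ S ∧ ∃ T : Finset ℂ, T.card ≤ N ∧
        ∀ t, IsLimitDirection S p t → t ∈ T} = 0) ∧
    dimH {p | p ∈ S ∧ ∃ T : Finset ℂ, T.card ≤ N ∧
        ∀ t, IsLimitDirection S p t → t ∈ T} ≤ 1 := by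
  have key : ∀ d : ℝ, 1 < d →
      μH[d] {p | p ∈ S ∧ ∃ T : Finset ℂ, T.card ≤ N ∧
        ∀ t, IsLimitDirection S p t → t ∈ T} = 0 := by
    intro d hd
    set ε : ℝ := Real.sin (Real.pi / (2 * (N:ℝ) + 1)) / 4 with hε
    have hπ := Real.pi_pos
    have hN1 : (1:ℝ) ≤ (N:ℝ) := by exact_mod_cast hN
    have hsinpos : 0 < Real.sin (Real.pi / (2 * (N:ℝ) + 1)) := by
      apply Real.sin_pos_of_pos_of_lt_pi
      · positivity
      · rw [div_lt_iff₀ (by positivity)]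
        nlinarith
    have hε0 : 0 < ε := by rw [hε]; positivity
    have hε1 : ε ≤ 1 := by
      have := Real.sin_le_one (Real.pi / (2 * (N:ℝ) + 1))
      rw [hε]; linarith
    obtain ⟨D, hDc, hDd⟩ := TopologicalSpace.exists_countable_dense ℂ
    set Piece : ℕ → Finset ℂ → ℂ → Set ℂ := fun k F z =>
      {p | p ∈ S ∧ p ∈ Metric.ball z (1/(2*((k:ℝ)+1))) ∧
        ∀ q ∈ S, q ≠ p → dist q p < 1/((k:ℝ)+1) →
          ∃ e ∈ F, ‖(q - p)/(‖q - p‖:ℂ) - e‖ ≤ 2*ε} with hPiece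
    set I : Set (ℕ × Finset ℂ × ℂ) :=
      {i | ↑i.2.1 ⊆ D ∧ i.2.1.card ≤ N ∧ i.2.2 ∈ D} with hI
    have hIc : I.Countable := by
      have h1 : {F : Finset ℂ | ↑F ⊆ D}.Countable := by
        have h2 := Set.countable_setOf_finite_subset hDc
        have h3 : ((fun F : Finset ℂ => (F : Set ℂ)) ⁻¹'
            {t | t.Finite ∧ t ⊆ D}).Countable := h2.preimage Finset.coe_injective
        refine Set.Countable.mono ?_ h3
        intro F hF
        exact ⟨F.finite_toSet, hF⟩
      refine Set.Countable.mono ?_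
        ((Set.countable_univ (α := ℕ)).prod (h1.prod hDc))
      rintro ⟨k, F, z⟩ ⟨h1', h2', h3'⟩
      exact ⟨trivial, h1', h3'⟩
    have cover : {p | p ∈ S ∧ ∃ T : Finset ℂ, T.card ≤ N ∧
        ∀ t, IsLimitDirection S p t → t ∈ T} ⊆
        ⋃ i ∈ I, Piece i.1 i.2.1 i.2.2 := by
      rintro p ⟨hpS, T, hTcard, hT⟩
      obtain ⟨r, hr0, hr⟩ := stepA S p ε hε0
      obtain ⟨k, hk⟩ := exists_nat_one_div_lt hr0
      obtain ⟨z, hzD, hz⟩ := hDd.exists_dist_lt p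
        (show 0 < 1/(2*((k:ℝ)+1)) by positivity)
      set L : Set ℂ := {t | IsLimitDirection S p t} with hL
      have hLfin : L.Finite := T.finite_toSet.subset (fun t ht => hT t ht)
      have hch : ∀ t : ℂ, ∃ e, IsLimitDirection S p t → e ∈ D ∧ dist t e < ε := by
        intro t
        obtain ⟨e, heD, he⟩ := hDd.exists_dist_lt t hε0
        exact ⟨e, fun _ => ⟨heD, he⟩⟩
      choose net hnet using hch
      set F : Finset ℂ := hLfin.toFinset.image net with hF
      refine Set.mem_biUnion (show (k, F, z) ∈ I from ?_) (show p ∈ Piece k F z from ?_)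
      · refine ⟨?_, ?_, hzD⟩
        · intro e he
          simp only [hF, Finset.coe_image, Set.mem_image, Finset.mem_coe] at he
          obtain ⟨t, ht, rfl⟩ := he
          rw [Set.Finite.mem_toFinset] at ht
          exact (hnet t ht).1
        · calc F.card ≤ hLfin.toFinset.card := Finset.card_image_le
            _ ≤ T.card := by
                apply Finset.card_le_card
                intro t ht
                rw [Set.Finite.mem_toFinset] at ht
                exact hT t ht
            _ ≤ N := hTcard
      · refine ⟨hpS, ?_, ?_⟩
        · rw [Metric.mem_ball]
          rw [dist_comm] at hz ⊢
          exact hz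
        · intro q hqS hqne hqd
          obtain ⟨t, htl, htd⟩ := hr q hqS hqne (hqd.trans hk)
          refine ⟨net t, ?_, ?_⟩
          · rw [hF]
            exact Finset.mem_image_of_mem net (hLfin.mem_toFinset.mpr htl)
          · have h1 := (hnet t htl).2
            rw [dist_eq_norm] at h1
            calc ‖(q - p)/(‖q - p‖:ℂ) - net t‖
                ≤ ‖(q - p)/(‖q - p‖:ℂ) - t‖ + ‖t - net t‖ := by
                  have : (q - p)/(‖q - p‖:ℂ) - net t
                      = ((q - p)/(‖q - p‖:ℂ) - t) + (t - net t) := by ring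
                  rw [this]; exact norm_add_le _ _
              _ ≤ 2 * ε := by linarith
    refine le_antisymm ?_ zero_le
    calc μH[d] {p | p ∈ S ∧ ∃ T : Finset ℂ, T.card ≤ N ∧
        ∀ t, IsLimitDirection S p t → t ∈ T}
        ≤ μH[d] (⋃ i ∈ I, Piece i.1 i.2.1 i.2.2) := measure_mono cover
      _ = 0 := by
          rw [measure_biUnion_null_iff hIc]
          rintro ⟨k, F, z⟩ ⟨-, hFcard, -⟩
          obtain ⟨v, hv, hgap⟩ := gap hN F hFcard
          apply piece_null hd v hv hε0 hε1
          rintro p hp q hq hne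
          obtain ⟨hpS, hpz, hpchord⟩ := hp
          obtain ⟨hqS, hqz, -⟩ := hq
          rw [Metric.mem_ball] at hpz hqz
          have hdist : dist q p < 1/((k:ℝ)+1) := by
            calc dist q p ≤ dist q z + dist z p := dist_triangle q z p
              _ < 1/(2*((k:ℝ)+1)) + 1/(2*((k:ℝ)+1)) := by
                  rw [dist_comm z p]; exact add_lt_add hqz hpz
              _ = 1/((k:ℝ)+1) := by
                  have hk0 : ((k:ℝ)+1) ≠ 0 := by positivity
                  field_simp
                  norm_num
          obtain ⟨e, heF, hue⟩ := hpchord q hqS hne hdist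
          have h1 : 3 * ε < ‖v - e‖ := by rw [hε]; exact (hgap e heF).1
          have h2 : 3 * ε < ‖v + e‖ := by rw [hε]; exact (hgap e heF).2
          set u : ℂ := (q - p)/(‖q - p‖:ℂ) with hu
          constructor
          · have htri : ‖v - e‖ ≤ ‖v - u‖ + ‖u - e‖ := by
              have : v - e = (v - u) + (u - e) := by ring
              rw [this]; exact norm_add_le _ _
            have : ε < ‖v - u‖ := by linarith
            rwa [norm_sub_rev] at this
          · have htri : ‖v + e‖ ≤ ‖v + u‖ + ‖e - u‖ := by
              have : v + e = (v + u) + (e - u) := by ring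
              rw [this]; exact norm_add_le _ _
            have h3 : ‖e - u‖ ≤ 2 * ε := by rwa [norm_sub_rev] at hue
            have : ε < ‖v + u‖ := by linarith
            rwa [add_comm] at this
  refine ⟨key, ?_⟩
  refine dimH_le fun d' hd' => ?_
  by_contra hcon
  push_neg at hcon
  have h1 : (1:ℝ) < (d' : ℝ) := by exact_mod_cast hcon
  rw [key _ h1] at hd'
  exact ENNReal.zero_ne_top hd'
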